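/- For each integer n ≥ 1 and spline order k ≥ 0, the supremum over ξ ∈ [−π, π] of w_{k,n}(ξ) := ξ^{2(k+1)}/(ξ + 2πn)^{2(k+1)} + ξ^{2(k+1)}/(ξ − 2πn)^{2(k+1)} equals w_{k,n}(π) = (2n−1)^{−2(k+1)} + (2n+1)^{−2(k+1)}; this holds because w_{k,n} is even and convex on [−π, π]. -/

import Mathlib

open Real

noncomputable section

/-- The weight function `w_{k,n}(ξ) = ξ^{2(k+1)}/(ξ+2πn)^{2(k+1)} + ξ^{2(k+1)}/(ξ−2πn)^{2(k+1)}`. -/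
def splineWeight (k n : ℕ) (ξ : ℝ) : ℝ :=
  ξ ^ (2 * (k + 1)) / (ξ + 2 * Real.pi * n) ^ (2 * (k + 1)) +
    ξ ^ (2 * (k + 1)) / (ξ - 2 * Real.pi * n) ^ (2 * (k + 1))

lemma hd1 (k : ℕ) (a x : ℝ) (h : x + a ≠ 0) :
    HasDerivAt (fun x : ℝ => x ^ (2*(k+1)) / (x + a) ^ (2*(k+1)))
      ((2*(k:ℝ)+2) * a * x ^ (2*k+1) / (x + a) ^ (2*k+3)) x := by
  have e1 : 2*(k+1) - 1 = 2*k+1 := by omega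
  have h1 : HasDerivAt (fun x : ℝ => x ^ (2*(k+1))) ((2*(k:ℝ)+2) * x ^ (2*k+1)) x := by
    have := hasDerivAt_pow (2*(k+1)) x
    rw [e1] at this
    refine this.congr_deriv (Eq.symm ?_)
    push_cast; ring
  have h2 : HasDerivAt (fun x : ℝ => (x + a) ^ (2*(k+1))) ((2*(k:ℝ)+2) * (x+a) ^ (2*k+1)) x := by
    have := ((hasDerivAt_id x).add_const a).pow (2*(k+1))
    rw [e1] at this
    refine this.congr_deriv (Eq.symm ?_)
    push_cast; simp
    exact Or.inl (by ring)
  have := h1.div h2 (pow_ne_zero _ h)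
  refine this.congr_deriv (Eq.symm ?_)
  have h3 : (x+a) ^ (2*k+1) ≠ 0 := pow_ne_zero _ h
  rw [show 2*(k+1) = 2*k+2 from by omega]
  field_simp
  ring

lemma hd2 (k : ℕ) (a x : ℝ) (h : x + a ≠ 0) :
    HasDerivAt (fun x : ℝ => (2*(k:ℝ)+2) * a * x ^ (2*k+1) / (x + a) ^ (2*k+3))
      ((2*(k:ℝ)+2) * a * x ^ (2*k) * ((2*(k:ℝ)+1)*a - 2*x) / (x + a) ^ (2*k+4)) x := by
  have e1 : 2*k+1 - 1 = 2*k := by omega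
  have e2 : 2*k+3 - 1 = 2*k+2 := by omega
  have h1 : HasDerivAt (fun x : ℝ => (2*(k:ℝ)+2) * a * x ^ (2*k+1))
      ((2*(k:ℝ)+2) * a * ((2*(k:ℝ)+1) * x ^ (2*k))) x := by
    have := (hasDerivAt_pow (2*k+1) x).const_mul ((2*(k:ℝ)+2) * a)
    rw [e1] at this
    refine this.congr_deriv (Eq.symm ?_)
    push_cast; ring
  have h2 : HasDerivAt (fun x : ℝ => (x + a) ^ (2*k+3)) ((2*(k:ℝ)+3) * (x+a) ^ (2*k+2)) x := by
    have := ((hasDerivAt_id x).add_const a).pow (2*k+3)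
    rw [e2] at this
    refine this.congr_deriv (Eq.symm ?_)
    push_cast; simp
  have := h1.div h2 (pow_ne_zero _ h)
  refine this.congr_deriv (Eq.symm ?_)
  field_simp
  ring

lemma convexAux (k : ℕ) (a : ℝ) (ha : 2 * Real.pi ≤ |a|) :
    ConvexOn ℝ (Set.Icc (-Real.pi) Real.pi)
      (fun x : ℝ => x ^ (2*(k+1)) / (x + a) ^ (2*(k+1))) := by
  have hπ := Real.pi_pos
  have hne : ∀ x ∈ Set.Icc (-Real.pi) Real.pi, x + a ≠ 0 := by
    intro x hx
    rcases abs_cases a with ⟨h1, h2⟩ | ⟨h1, h2⟩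
    · have : 0 < x + a := by rw [h1] at ha; linarith [hx.1]
      exact ne_of_gt this
    · have : x + a < 0 := by rw [h1] at ha; linarith [hx.2]
      exact ne_of_lt this
  have hint : interior (Set.Icc (-Real.pi) Real.pi) ⊆ Set.Icc (-Real.pi) Real.pi :=
    interior_subset
  refine convexOn_of_hasDerivWithinAt2_nonneg (convex_Icc _ _) ?_
    (f' := fun x => (2*(k:ℝ)+2) * a * x ^ (2*k+1) / (x + a) ^ (2*k+3))
    (f'' := fun x => (2*(k:ℝ)+2) * a * x ^ (2*k) * ((2*(k:ℝ)+1)*a - 2*x) / (x + a) ^ (2*k+4))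
    ?_ ?_ ?_
  · exact ContinuousOn.div (by fun_prop) (by fun_prop) fun x hx => pow_ne_zero _ (hne x hx)
  · intro x hx
    exact (hd1 k a x (hne x (hint hx))).hasDerivWithinAt
  · intro x hx
    exact (hd2 k a x (hne x (hint hx))).hasDerivWithinAt
  · intro x hx
    have hx' := hint hx
    have h0 : x + a ≠ 0 := hne x hx'
    have h4 : (0:ℝ) < (x + a) ^ (2*k+4) := by
      rw [show 2*k+4 = 2*(k+2) from by omega, pow_mul]
      exact pow_pos (lt_of_le_of_ne (sq_nonneg _) (Ne.symm (pow_ne_zero 2 h0))) _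
    have hk : (0:ℝ) ≤ (k:ℝ) := Nat.cast_nonneg k
    have key : 0 ≤ a * ((2*(k:ℝ)+1)*a - 2*x) := by
      rcases abs_cases a with ⟨h1, h2⟩ | ⟨h1, h2⟩
      · rw [h1] at ha
        have hka : 0 ≤ 2*(k:ℝ)*a := by positivity
        have hterm : 0 ≤ (2*(k:ℝ)+1)*a - 2*x := by nlinarith [hx'.2]
        exact mul_nonneg h2 hterm
      · rw [h1] at ha
        have hka : 2*(k:ℝ)*a ≤ 0 := mul_nonpos_of_nonneg_of_nonpos (by positivity) h2.le
        have hterm : (2*(k:ℝ)+1)*a - 2*x ≤ 0 := by nlinarith [hx'.1]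
        nlinarith
    show 0 ≤ (2*(k:ℝ)+2) * a * x ^ (2*k) * ((2*(k:ℝ)+1)*a - 2*x) / (x + a) ^ (2*k+4)
    have hre : (2*(k:ℝ)+2) * a * x ^ (2*k) * ((2*(k:ℝ)+1)*a - 2*x)
        = ((2*(k:ℝ)+2) * x ^ (2*k)) * (a * ((2*(k:ℝ)+1)*a - 2*x)) := by ring
    rw [hre]
    have hx2 : (0:ℝ) ≤ x ^ (2*k) := by rw [pow_mul]; positivity
    exact div_nonneg (mul_nonneg (mul_nonneg (by positivity) hx2) key) h4.le

/-- For `n ≥ 1` and `k ≥ 0`, the supremum of `w_{k,n}` over `[−π,π]` is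
attained at `ξ = π` and equals `(2n−1)^{−2(k+1)} + (2n+1)^{−2(k+1)}`; moreover `w_{k,n}` is
even and convex on `[−π,π]`. -/
theorem splineWeight_sup (k n : ℕ) (hn : 1 ≤ n) :
    IsGreatest (splineWeight k n '' Set.Icc (-Real.pi) Real.pi) (splineWeight k n Real.pi) ∧
    splineWeight k n Real.pi =
      ((2 * (n : ℝ) - 1) ^ (2 * (k + 1)))⁻¹ + ((2 * (n : ℝ) + 1) ^ (2 * (k + 1)))⁻¹ ∧
    (∀ ξ : ℝ, splineWeight k n (-ξ) = splineWeight k n ξ) ∧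
    ConvexOn ℝ (Set.Icc (-Real.pi) Real.pi) (splineWeight k n) := by
  have hπ := Real.pi_pos
  have hm : Even (2*(k+1)) := even_two_mul _
  have hn' : (1:ℝ) ≤ (n:ℝ) := by exact_mod_cast hn
  have ha1 : 2 * Real.pi ≤ |2 * Real.pi * (n:ℝ)| := by
    rw [abs_of_nonneg (by positivity)]
    nlinarith
  have ha2 : 2 * Real.pi ≤ |-(2 * Real.pi * (n:ℝ))| := by rwa [abs_neg]
  have hconv : ConvexOn ℝ (Set.Icc (-Real.pi) Real.pi) (splineWeight k n) := by
    have h := (convexAux k (2 * Real.pi * n) ha1).add (convexAux k (-(2 * Real.pi * n)) ha2)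
    convert h using 1
    · rfl
    · funext x; simp only [splineWeight, Pi.add_apply, sub_eq_add_neg]
  have heven : ∀ ξ : ℝ, splineWeight k n (-ξ) = splineWeight k n ξ := by
    intro ξ
    simp only [splineWeight]
    rw [show -ξ + 2*Real.pi*n = -(ξ - 2*Real.pi*n) by ring,
        show -ξ - 2*Real.pi*n = -(ξ + 2*Real.pi*n) by ring,
        hm.neg_pow, hm.neg_pow, hm.neg_pow]
    ring
  refine ⟨⟨⟨Real.pi, ⟨by linarith, le_refl _⟩, rfl⟩, ?_⟩, ?_, heven, hconv⟩
  · rintro y ⟨ξ, hξ, rfl⟩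
    have hmem1 : -Real.pi ∈ Set.Icc (-Real.pi) Real.pi := ⟨le_refl _, by linarith⟩
    have hmem2 : Real.pi ∈ Set.Icc (-Real.pi) Real.pi := ⟨by linarith, le_refl _⟩
    have hseg : ξ ∈ segment ℝ (-Real.pi) Real.pi := by
      rwa [segment_eq_Icc (by linarith : -Real.pi ≤ Real.pi)]
    have h := hconv.le_on_segment hmem1 hmem2 hseg
    rwa [heven Real.pi, max_self] at h
  · simp only [splineWeight]
    have h1 : (2*(n:ℝ)+1) ≠ 0 := by positivity
    have h2 : (2*(n:ℝ)-1) ≠ 0 := by nlinarith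
    rw [show Real.pi + 2*Real.pi*n = Real.pi*(2*n+1) by ring,
        show Real.pi - 2*Real.pi*n = -(Real.pi*(2*n-1)) by ring,
        hm.neg_pow, mul_pow, mul_pow]
    field_simp
    ring
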